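/- Let G be a minimally nonperfectly divisible graph. Then G has no nonempty simplicial set; in particular, for every vertex v of G, N(v) is not a clique. -/

import Mathlib

open SimpleGraph

variable {V : Type}

/-- The clique number of the subgraph of `G` induced on `S`. -/
noncomputable def omegaOn (G : SimpleGraph V) (S : Set V) : ℕ :=
  sSup {n | ∃ s : Finset V, ↑s ⊆ S ∧ G.IsNClique n s}

/-- The subgraph of `G` induced on `S` is a perfect graph. -/
def IsPerfectOn (G : SimpleGraph V) (S : Set V) : Prop :=
  ∀ T : Set V, T ⊆ S → (G.induce T).chromaticNumber = (omegaOn G T : ℕ∞)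

/-- Every nonempty induced subgraph of `G[S]` admits a perfect division. -/
def PerfDivOn (G : SimpleGraph V) (S : Set V) : Prop :=
  ∀ H : Set V, H ⊆ S → H.Nonempty →
    ∃ A B : Set V, A ∪ B = H ∧ Disjoint A B ∧
      IsPerfectOn G A ∧ omegaOn G B < omegaOn G H

/-- `G` is minimally nonperfectly divisible. -/
def MNPD (G : SimpleGraph V) : Prop :=
  ¬ PerfDivOn G Set.univ ∧ ∀ S : Set V, S ≠ Set.univ → PerfDivOn G S

/-- The external neighbourhood `N(X)`. -/
def extNbhd (G : SimpleGraph V) (X : Set V) : Set V :=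
  {v | v ∉ X ∧ ∃ x ∈ X, G.Adj v x}

section Aux

lemma omegaSet_nonempty (G : SimpleGraph V) (S : Set V) :
    {n | ∃ s : Finset V, ↑s ⊆ S ∧ G.IsNClique n s}.Nonempty :=
  ⟨0, ∅, by simp, by simp⟩

lemma omegaSet_bddAbove [Fintype V] (G : SimpleGraph V) (S : Set V) :
    BddAbove {n | ∃ s : Finset V, ↑s ⊆ S ∧ G.IsNClique n s} := by
  refine ⟨Fintype.card V, fun n hn => ?_⟩
  obtain ⟨s, -, hs⟩ := hn
  exact hs.2 ▸ s.card_le_univ.trans_eq (by simp)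

lemma le_omegaOn [Fintype V] {G : SimpleGraph V} {S : Set V} {n : ℕ} {s : Finset V}
    (h1 : ↑s ⊆ S) (h2 : G.IsNClique n s) : n ≤ omegaOn G S :=
  le_csSup (omegaSet_bddAbove G S) ⟨s, h1, h2⟩

lemma omegaOn_le {G : SimpleGraph V} {S : Set V} {m : ℕ}
    (h : ∀ n, (∃ s : Finset V, ↑s ⊆ S ∧ G.IsNClique n s) → n ≤ m) : omegaOn G S ≤ m :=
  csSup_le (omegaSet_nonempty G S) h

lemma omegaOn_mono [Fintype V] {G : SimpleGraph V} {S T : Set V} (h : S ⊆ T) :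
    omegaOn G S ≤ omegaOn G T :=
  csSup_le_csSup (omegaSet_bddAbove G T) (omegaSet_nonempty G S)
    (fun _ ⟨s, h1, h2⟩ => ⟨s, h1.trans h, h2⟩)

lemma exists_omega_clique [Fintype V] (G : SimpleGraph V) (S : Set V) :
    ∃ s : Finset V, ↑s ⊆ S ∧ G.IsNClique (omegaOn G S) s :=
  Nat.sSup_mem (omegaSet_nonempty G S) (omegaSet_bddAbove G S)

lemma omegaOn_empty (G : SimpleGraph V) : omegaOn G (∅ : Set V) = 0 :=
  Nat.le_zero.mp <| omegaOn_le (fun n ⟨s, h1, h2⟩ => by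
    have : s = ∅ := Finset.coe_eq_empty.mp (Set.subset_empty_iff.mp h1)
    subst this; simpa using h2.2.symm.le)

lemma omegaOn_le_chromaticNumber [Fintype V] (G : SimpleGraph V) (T : Set V) :
    (omegaOn G T : ℕ∞) ≤ (G.induce T).chromaticNumber := by
  obtain ⟨s, hsub, hs⟩ := exists_omega_clique G T
  have hinj : Function.Injective (fun x : {x // x ∈ s} => (⟨x.1, hsub x.2⟩ : T)) := by
    intro a b hab
    simp only [Subtype.mk.injEq] at hab
    exact Subtype.ext hab
  let t : Finset T := s.attach.map ⟨_, hinj⟩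
  have hclique : (G.induce T).IsClique ↑t := by
    intro x hx y hy hxy
    simp only [t, Finset.coe_map, Set.mem_image, Finset.mem_coe, Finset.mem_attach] at hx hy
    obtain ⟨a, -, rfl⟩ := hx
    obtain ⟨b, -, rfl⟩ := hy
    have hab : (a : V) ≠ (b : V) := fun h => hxy (by rw [Subtype.ext h])
    exact hs.1 a.2 b.2 hab
  have hcard : t.card = omegaOn G T := by
    simp [t, hs.2]
  calc (omegaOn G T : ℕ∞) = (t.card : ℕ∞) := by rw [hcard]
    _ ≤ (G.induce T).chromaticNumber := hclique.card_le_chromaticNumber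

lemma perfectOn_empty (G : SimpleGraph V) : IsPerfectOn G (∅ : Set V) := by
  intro T hT
  have hTe : T = ∅ := Set.subset_empty_iff.mp hT
  subst hTe
  have : IsEmpty (∅ : Set V) := by simp [Set.isEmpty_coe_sort]
  rw [chromaticNumber_eq_zero_of_isEmpty, omegaOn_empty]
  rfl

lemma perfectOn_insert [Fintype V] {G : SimpleGraph V} {A : Set V} {v : V}
    (hv : G.IsClique (G.neighborSet v)) (hA : IsPerfectOn G A) :
    IsPerfectOn G (insert v A) := by
  classical
  intro T hT
  by_cases hvT : v ∈ T
  · set T' : Set V := T \ {v} with hT'def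
    have hT'sub : T' ⊆ A := by
      intro x hx
      rcases hT hx.1 with h | h
      · exact absurd h hx.2
      · exact h
    have hχ' := hA T' hT'sub
    set m := omegaOn G T with hm
    -- neighbors of v in T
    set s : Finset V := Finset.univ.filter (fun x => x ∈ T ∧ G.Adj v x) with hs
    have hsmem : ∀ x, x ∈ s ↔ x ∈ T ∧ G.Adj v x := by
      intro x; simp [hs]
    have hvs : v ∉ s := fun h => G.loopless.irrefl v ((hsmem v).mp h).2
    have hsnb : (↑s : Set V) ⊆ G.neighborSet v := fun x hx => ((hsmem x).mp hx).2
    have hclique : G.IsClique (insert v (↑s : Set V)) :=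
      (hv.subset hsnb).insert (fun b hb _ => ((hsmem b).mp hb).2)
    have hcard1 : s.card + 1 ≤ m := by
      refine le_omegaOn (s := insert v s) ?_ ⟨?_, ?_⟩
      · intro x hx
        rcases Finset.mem_insert.mp (by exact_mod_cast hx) with h | h
        · exact h ▸ hvT
        · exact ((hsmem x).mp h).1
      · simpa using hclique
      · rw [Finset.card_insert_of_notMem hvs]
    have hm' : omegaOn G T' ≤ m := hm ▸ omegaOn_mono Set.diff_subset
    have hcol' : (G.induce T').Colorable m := by
      rw [← chromaticNumber_le_iff_colorable, hχ']
      exact_mod_cast hm'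
    obtain ⟨C⟩ := hcol'
    have memT' : ∀ x ∈ s, x ∈ T' :=
      fun x hx => ⟨((hsmem x).mp hx).1, fun h => ((hsmem x).mp hx).2.ne' h⟩
    -- colors used on neighbors of v
    set used : Finset (Fin m) := s.attach.image
      (fun x => C ⟨x.1, memT' x.1 x.2⟩) with hused
    have husedcard : used.card < m := by
      calc used.card ≤ s.attach.card := Finset.card_image_le
        _ = s.card := Finset.card_attach
        _ < m := by omega
    have hne : used ≠ Finset.univ := by
      intro h
      rw [h, Finset.card_univ, Fintype.card_fin] at husedcard
      omega
    have hcpos : 0 < usedᶜ.card := by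
      rw [Finset.card_compl, Fintype.card_fin]
      omega
    obtain ⟨a, ha⟩ := Finset.card_pos.mp hcpos
    have ha' : a ∉ used := Finset.mem_compl.mp ha
    let C' : (G.induce T).Coloring (Fin m) := Coloring.mk
      (fun x => if hx : x.1 = v then a else C ⟨x.1, x.2, hx⟩)
      (by
        rintro ⟨x, hxT⟩ ⟨y, hyT⟩ hadj
        have hadj' : G.Adj x y := hadj
        by_cases hx : x = v <;> by_cases hy : y = v
        · exact (hadj'.ne (hx.trans hy.symm)).elim
        · simp only [dif_pos hx, dif_neg hy]
          intro hcontr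
          apply ha'
          have hys : y ∈ s := (hsmem y).mpr ⟨hyT, hx ▸ hadj'⟩
          rw [hcontr, hused]
          exact Finset.mem_image.mpr ⟨⟨y, hys⟩, Finset.mem_attach _ _, rfl⟩
        · simp only [dif_pos hy, dif_neg hx]
          intro hcontr
          apply ha'
          have hxs : x ∈ s := (hsmem x).mpr ⟨hxT, by rw [← hy]; exact hadj'.symm⟩
          rw [← hcontr, hused]
          exact Finset.mem_image.mpr ⟨⟨x, hxs⟩, Finset.mem_attach _ _, rfl⟩
        · simp only [dif_neg hx, dif_neg hy]
          have : (G.induce T').Adj ⟨x, ⟨hxT, hx⟩⟩ ⟨y, ⟨hyT, hy⟩⟩ := hadj'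
          exact C.valid this)
    have hcol : (G.induce T).Colorable m := ⟨C'⟩
    exact le_antisymm hcol.chromaticNumber_le (hm ▸ omegaOn_le_chromaticNumber G T)
  · have hTA : T ⊆ A := by
      intro x hx
      rcases hT hx with h | h
      · exact absurd (h ▸ hx) hvT
      · exact h
    exact hA T hTA

end Aux

lemma no_simplicial_vertex [Fintype V] (G : SimpleGraph V) (hG : MNPD G) (v : V)
    (hv : G.IsClique (G.neighborSet v)) : False := by
  apply hG.1
  intro H hH hHne
  by_cases hHuniv : H = Set.univ
  · subst hHuniv
    have hS : ({v}ᶜ : Set V) ≠ Set.univ := by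
      intro h
      have : v ∈ ({v}ᶜ : Set V) := h.ge (Set.mem_univ v)
      simp at this
    have key : ∃ A B : Set V, A ∪ B = ({v}ᶜ : Set V) ∧ Disjoint A B ∧ IsPerfectOn G A ∧
        omegaOn G B < omegaOn G Set.univ := by
      rcases Set.eq_empty_or_nonempty ({v}ᶜ : Set V) with he | hne
      · refine ⟨∅, ∅, by simp [he], disjoint_bot_left, perfectOn_empty G, ?_⟩
        have h1 : 1 ≤ omegaOn G Set.univ := by
          refine le_omegaOn (s := {v}) (by simp) ⟨?_, by simp⟩
          simp
        rw [omegaOn_empty]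
        omega
      · obtain ⟨A, B, h1, h2, h3, h4⟩ := hG.2 _ hS _ subset_rfl hne
        exact ⟨A, B, h1, h2, h3, h4.trans_le (omegaOn_mono (Set.subset_univ _))⟩
    obtain ⟨A, B, h1, h2, h3, h4⟩ := key
    refine ⟨insert v A, B, ?_, ?_, perfectOn_insert hv h3, h4⟩
    · rw [Set.insert_union, h1]
      ext x
      by_cases hx : x = v <;> simp [hx]
    · rw [Set.disjoint_left]
      intro x hx hxB
      rcases hx with rfl | hxA
      · have : x ∈ ({x}ᶜ : Set V) := h1 ▸ Set.mem_union_right _ hxB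
        simp at this
      · exact Set.disjoint_left.mp h2 hxA hxB
  · exact hG.2 H hHuniv H subset_rfl hHne

theorem stmt_5 [Fintype V] (G : SimpleGraph V) (hG : MNPD G) :
    (∀ X : Set V, X.Nonempty → ¬ (∀ x ∈ X, G.IsClique (G.neighborSet x))) ∧
    (∀ v : V, ¬ G.IsClique (G.neighborSet v)) := by
  constructor
  · rintro X ⟨x, hx⟩ hall
    exact no_simplicial_vertex G hG x (hall x hx)
  · intro v hv
    exact no_simplicial_vertex G hG v hv
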